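/- Let L be a Lindblad generator on M_d(ℂ) built from a Hermitian H and Kraus operators {h_α}, let L^T[X] = i[H,X] + Σ_α (h_α† X h_α − (1/2){h_α† h_α, X}) be its dual generator, and let G^T[X] = lim_{T→∞} (1/T)∫₀^T exp(tL^T)[X] dt be the dual time average. If there exists an invertible (full-rank) density matrix ρ* with L[ρ*] = 0, then G^T is a conditional expectation onto the fixed-point set: for all Y₁, Y₂ ∈ M_d(ℂ) with L^T[Y₁] = L^T[Y₂] = 0 and all X ∈ M_d(ℂ), G^T[Y₁ X Y₂] = Y₁ G^T[X] Y₂. -/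

import Mathlib

open Matrix Filter
open scoped ComplexOrder

attribute [local instance] Matrix.frobeniusNormedAddCommGroup Matrix.frobeniusNormedSpace

variable {d : ℕ}

/-- The Lindblad generator built from `H` and Kraus operators `h`. -/
noncomputable def lindbladOf (H : Matrix (Fin d) (Fin d) ℂ) {n : ℕ}
    (h : Fin n → Matrix (Fin d) (Fin d) ℂ) :
    Matrix (Fin d) (Fin d) ℂ →ₗ[ℂ] Matrix (Fin d) (Fin d) ℂ :=
  (-Complex.I) • (LinearMap.mulLeft ℂ H - LinearMap.mulRight ℂ H) +
    ∑ α, ((LinearMap.mulLeft ℂ (h α)).comp (LinearMap.mulRight ℂ (h α)ᴴ)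
      - ((1 : ℂ)/2) • (LinearMap.mulLeft ℂ ((h α)ᴴ * h α) + LinearMap.mulRight ℂ ((h α)ᴴ * h α)))

/-- The dual (Heisenberg picture) Lindblad generator built from `H` and Kraus operators `h`. -/
noncomputable def lindbladDualOf (H : Matrix (Fin d) (Fin d) ℂ) {n : ℕ}
    (h : Fin n → Matrix (Fin d) (Fin d) ℂ) :
    Matrix (Fin d) (Fin d) ℂ →ₗ[ℂ] Matrix (Fin d) (Fin d) ℂ :=
  Complex.I • (LinearMap.mulLeft ℂ H - LinearMap.mulRight ℂ H) +
    ∑ α, ((LinearMap.mulLeft ℂ (h α)ᴴ).comp (LinearMap.mulRight ℂ (h α))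
      - ((1 : ℂ)/2) • (LinearMap.mulLeft ℂ ((h α)ᴴ * h α) + LinearMap.mulRight ℂ ((h α)ᴴ * h α)))

/-- `exp (t L)` as a map on matrices. -/
noncomputable def expL (L : Matrix (Fin d) (Fin d) ℂ →ₗ[ℂ] Matrix (Fin d) (Fin d) ℂ) (t : ℝ) :
    Matrix (Fin d) (Fin d) ℂ →L[ℂ] Matrix (Fin d) (Fin d) ℂ :=
  haveI : IsTopologicalRing (Matrix (Fin d) (Fin d) ℂ →L[ℂ] Matrix (Fin d) (Fin d) ℂ) :=
    @NonUnitalSeminormedRing.toIsTopologicalRing _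
      (ContinuousLinearMap.toNormedRing (𝕜 := ℂ)
        (E := Matrix (Fin d) (Fin d) ℂ)).toSeminormedRing.toNonUnitalSeminormedRing
  NormedSpace.exp ((t : ℂ) • LinearMap.toContinuousLinearMap L)

/-! ### Auxiliary lemmas -/

lemma lindbladOf_apply (H : Matrix (Fin d) (Fin d) ℂ) {n : ℕ}
    (h : Fin n → Matrix (Fin d) (Fin d) ℂ) (X : Matrix (Fin d) (Fin d) ℂ) :
    lindbladOf H h X = (-Complex.I) • (H * X - X * H) +
      ∑ α, (h α * X * (h α)ᴴ
        - ((1 : ℂ)/2) • ((h α)ᴴ * h α * X + X * ((h α)ᴴ * h α))) := by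
  simp [lindbladOf, LinearMap.sum_apply, mul_assoc]

lemma lindbladDualOf_apply (H : Matrix (Fin d) (Fin d) ℂ) {n : ℕ}
    (h : Fin n → Matrix (Fin d) (Fin d) ℂ) (X : Matrix (Fin d) (Fin d) ℂ) :
    lindbladDualOf H h X = Complex.I • (H * X - X * H) +
      ∑ α, ((h α)ᴴ * X * h α
        - ((1 : ℂ)/2) • ((h α)ᴴ * h α * X + X * ((h α)ᴴ * h α))) := by
  simp [lindbladDualOf, LinearMap.sum_apply, mul_assoc]

lemma tr_comm' (A B : Matrix (Fin d) (Fin d) ℂ) : (A*B).trace = (B*A).trace :=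
  Matrix.trace_mul_comm A B

/-- Duality of the Lindblad generators with respect to the trace pairing. -/
lemma trace_duality (H : Matrix (Fin d) (Fin d) ℂ) {n : ℕ}
    (h : Fin n → Matrix (Fin d) (Fin d) ℂ) (ρ X : Matrix (Fin d) (Fin d) ℂ) :
    (lindbladOf H h ρ * X).trace = (ρ * lindbladDualOf H h X).trace := by
  rw [lindbladOf_apply, lindbladDualOf_apply]
  simp only [add_mul, mul_add, Finset.sum_mul, Finset.mul_sum, sub_mul, mul_sub,
    smul_mul_assoc, mul_smul_comm, trace_add, trace_sub, trace_smul, trace_sum,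
    smul_add, smul_sub, smul_eq_mul, mul_assoc]
  congr 1
  · have e : (H*(ρ*X)).trace = (ρ*(X*H)).trace := by
      rw [tr_comm' H (ρ*X), mul_assoc]
    linear_combination (-Complex.I) * e
  · refine Finset.sum_congr rfl fun α _ => ?_
    have e1 : (h α*(ρ*((h α)ᴴ*X))).trace = (ρ*((h α)ᴴ*(X*h α))).trace := by
      rw [tr_comm' (h α) _, mul_assoc, mul_assoc]
    have e2 : ((h α)ᴴ*(h α*(ρ*X))).trace = (ρ*(X*((h α)ᴴ*h α))).trace := by
      rw [← mul_assoc, ← mul_assoc, tr_comm' _ X, ← mul_assoc, tr_comm' _ ρ]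
    linear_combination e1 - (1/2 : ℂ) * e2

/-- The dual generator is star (conjugate-transpose) preserving when `H` is Hermitian. -/
lemma lindbladDualOf_conjTranspose (H : Matrix (Fin d) (Fin d) ℂ) (hH : Hᴴ = H) {n : ℕ}
    (h : Fin n → Matrix (Fin d) (Fin d) ℂ) (Y : Matrix (Fin d) (Fin d) ℂ) :
    (lindbladDualOf H h Y)ᴴ = lindbladDualOf H h Yᴴ := by
  rw [lindbladDualOf_apply, lindbladDualOf_apply, ← sub_eq_zero]
  simp only [conjTranspose_add, conjTranspose_sub, conjTranspose_smul, conjTranspose_sum,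
    conjTranspose_mul, conjTranspose_conjTranspose, hH, Complex.star_def, Complex.conj_I,
    star_div₀, star_one, star_ofNat, smul_add, smul_sub, neg_smul, mul_assoc]
  abel_nf
  simp only [Finset.smul_sum]
  rw [← Finset.sum_add_distrib]
  refine Finset.sum_eq_zero fun α _ => ?_
  simp only [neg_smul, one_smul]
  module

/-- The dissipation identity. -/
lemma lindblad_dissipation (H : Matrix (Fin d) (Fin d) ℂ) {n : ℕ}
    (h : Fin n → Matrix (Fin d) (Fin d) ℂ) (Y : Matrix (Fin d) (Fin d) ℂ) :
    lindbladDualOf H h (Yᴴ * Y) - (lindbladDualOf H h Yᴴ) * Y - Yᴴ * (lindbladDualOf H h Y)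
      = ∑ α, (h α * Y - Y * h α)ᴴ * (h α * Y - Y * h α) := by
  rw [lindbladDualOf_apply, lindbladDualOf_apply, lindbladDualOf_apply, ← sub_eq_zero]
  simp only [conjTranspose_sub, conjTranspose_mul, add_mul, mul_add, sub_mul, mul_sub,
    Finset.sum_mul, Finset.mul_sum, smul_mul_assoc, mul_smul_comm, smul_add, smul_sub,
    mul_assoc]
  abel_nf
  simp only [Finset.smul_sum]
  rw [← Finset.sum_add_distrib, ← Finset.sum_add_distrib, ← Finset.sum_add_distrib]
  refine Finset.sum_eq_zero fun α _ => ?_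
  simp only [neg_smul, one_smul]
  module

lemma diag_entry_eq (ρ C : Matrix (Fin d) (Fin d) ℂ) (i : Fin d) :
    (C * ρ * Cᴴ) i i = star (star (C i)) ⬝ᵥ ρ *ᵥ (star (C i)) := by
  simp only [Matrix.mul_apply, Matrix.conjTranspose_apply, dotProduct, Matrix.mulVec,
    Finset.sum_mul, Finset.mul_sum, Pi.star_apply, star_star, dotProduct]
  rw [Finset.sum_comm]
  exact Finset.sum_congr rfl fun j _ => Finset.sum_congr rfl fun k _ => by ring

lemma trace_conj_nonneg {ρ : Matrix (Fin d) (Fin d) ℂ} (hρ : ρ.PosDef)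
    (C : Matrix (Fin d) (Fin d) ℂ) : 0 ≤ (C * ρ * Cᴴ).trace := by
  rw [Matrix.trace]
  refine Finset.sum_nonneg fun i _ => ?_
  rw [Matrix.diag_apply, diag_entry_eq]
  by_cases hx : star (C i) = 0
  · simp [hx]
  · exact le_of_lt (hρ.dotProduct_mulVec_pos hx)

lemma trace_conj_eq_zero {ρ : Matrix (Fin d) (Fin d) ℂ} (hρ : ρ.PosDef)
    (C : Matrix (Fin d) (Fin d) ℂ) (hC : (C * ρ * Cᴴ).trace = 0) : C = 0 := by
  have h0 : ∀ i ∈ Finset.univ, (C * ρ * Cᴴ).diag i = 0 := by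
    rw [← Finset.sum_eq_zero_iff_of_nonneg]
    · exact hC
    · intro i _
      rw [Matrix.diag_apply, diag_entry_eq]
      by_cases hx : star (C i) = 0
      · simp [hx]
      · exact le_of_lt (hρ.dotProduct_mulVec_pos hx)
  ext i j
  by_contra hij
  have hxne : star (C i) ≠ 0 := by
    intro hz
    apply hij
    have := congrFun hz j
    simpa using star_eq_zero.mp this
  have := hρ.dotProduct_mulVec_pos hxne
  rw [← diag_entry_eq ρ C i] at this
  have h2 := h0 i (Finset.mem_univ i)
  rw [Matrix.diag_apply] at h2
  rw [h2] at this
  exact lt_irrefl _ this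

/-- Fixed points of the dual generator commute with the Kraus operators. -/
lemma fixed_comm_kraus (H : Matrix (Fin d) (Fin d) ℂ) (hH : Hᴴ = H) {n : ℕ}
    (h : Fin n → Matrix (Fin d) (Fin d) ℂ)
    {ρ : Matrix (Fin d) (Fin d) ℂ} (hρ : ρ.PosDef) (hstat : lindbladOf H h ρ = 0)
    (Y : Matrix (Fin d) (Fin d) ℂ) (hY : lindbladDualOf H h Y = 0) :
    ∀ α, h α * Y = Y * h α := by
  have hYs : lindbladDualOf H h Yᴴ = 0 := by
    rw [← lindbladDualOf_conjTranspose H hH, hY, conjTranspose_zero]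
  have hdiss := lindblad_dissipation H h Y
  rw [hY, hYs, zero_mul, mul_zero, sub_zero, sub_zero] at hdiss
  have htr : (ρ * lindbladDualOf H h (Yᴴ * Y)).trace = 0 := by
    rw [← trace_duality, hstat, zero_mul, trace_zero]
  rw [hdiss, Finset.mul_sum, trace_sum] at htr
  have htr' : ∑ α, ((h α * Y - Y * h α) * ρ * (h α * Y - Y * h α)ᴴ).trace = 0 := by
    rw [← htr]
    refine Finset.sum_congr rfl fun α _ => ?_
    rw [← mul_assoc, tr_comm' _ (h α * Y - Y * h α), ← mul_assoc]
  have hterm := (Finset.sum_eq_zero_iff_of_nonneg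
    (fun α _ => trace_conj_nonneg hρ (h α * Y - Y * h α))).mp htr'
  intro α
  have := trace_conj_eq_zero hρ _ (hterm α (Finset.mem_univ α))
  exact sub_eq_zero.mp this

lemma fixed_comm_all (H : Matrix (Fin d) (Fin d) ℂ) (hH : Hᴴ = H) {n : ℕ}
    (h : Fin n → Matrix (Fin d) (Fin d) ℂ)
    {ρ : Matrix (Fin d) (Fin d) ℂ} (hρ : ρ.PosDef) (hstat : lindbladOf H h ρ = 0)
    (Y : Matrix (Fin d) (Fin d) ℂ) (hY : lindbladDualOf H h Y = 0) :
    (∀ α, h α * Y = Y * h α) ∧ (∀ α, (h α)ᴴ * Y = Y * (h α)ᴴ) ∧ H * Y = Y * H := by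
  have hYs : lindbladDualOf H h Yᴴ = 0 := by
    rw [← lindbladDualOf_conjTranspose H hH, hY, conjTranspose_zero]
  have hk := fixed_comm_kraus H hH h hρ hstat Y hY
  have hk' : ∀ α, (h α)ᴴ * Y = Y * (h α)ᴴ := by
    intro α
    have := fixed_comm_kraus H hH h hρ hstat Yᴴ hYs α
    have h2 := congrArg conjTranspose this
    simpa using h2.symm
  refine ⟨hk, hk', ?_⟩
  rw [lindbladDualOf_apply] at hY
  have hterm : ∀ α, (h α)ᴴ * Y * h α
      - ((1 : ℂ)/2) • ((h α)ᴴ * h α * Y + Y * ((h α)ᴴ * h α)) = 0 := by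
    intro α
    have e1 : (h α)ᴴ * Y * h α = Y * ((h α)ᴴ * h α) := by
      rw [hk' α, mul_assoc]
    have e2 : (h α)ᴴ * h α * Y = Y * ((h α)ᴴ * h α) := by
      rw [mul_assoc, hk α, ← mul_assoc, hk' α, mul_assoc]
    rw [e1, e2, ← two_smul ℂ, smul_smul]
    norm_num
  rw [Finset.sum_eq_zero (fun α _ => hterm α), add_zero, smul_eq_zero] at hY
  rcases hY with h1 | h2
  · exact absurd h1 Complex.I_ne_zero
  · exact sub_eq_zero.mp h2

/-- The bimodule property of the dual generator over commuting elements. -/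
lemma lindbladDualOf_bimodule (H : Matrix (Fin d) (Fin d) ℂ) {n : ℕ}
    (h : Fin n → Matrix (Fin d) (Fin d) ℂ) (Y₁ Y₂ X : Matrix (Fin d) (Fin d) ℂ)
    (h1H : H * Y₁ = Y₁ * H) (h2H : H * Y₂ = Y₂ * H)
    (h1h : ∀ α, h α * Y₁ = Y₁ * h α) (h2h : ∀ α, h α * Y₂ = Y₂ * h α)
    (h1h' : ∀ α, (h α)ᴴ * Y₁ = Y₁ * (h α)ᴴ) (h2h' : ∀ α, (h α)ᴴ * Y₂ = Y₂ * (h α)ᴴ) :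
    lindbladDualOf H h (Y₁ * X * Y₂) = Y₁ * lindbladDualOf H h X * Y₂ := by
  have a1 : H * (Y₁ * X * Y₂) = Y₁ * (H * X) * Y₂ := by
    rw [← mul_assoc, ← mul_assoc, h1H, mul_assoc Y₁ H X]
  have a2 : (Y₁ * X * Y₂) * H = Y₁ * (X * H) * Y₂ := by
    rw [mul_assoc (Y₁ * X) Y₂ H, ← h2H, ← mul_assoc, mul_assoc Y₁ X H]
  have b1 : ∀ α, (h α)ᴴ * (Y₁ * X * Y₂) * h α = Y₁ * ((h α)ᴴ * X * h α) * Y₂ := by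
    intro α
    rw [← mul_assoc, ← mul_assoc, h1h' α, mul_assoc Y₁ (h α)ᴴ X,
      mul_assoc (Y₁ * ((h α)ᴴ * X)) Y₂ (h α), ← h2h α, ← mul_assoc,
      mul_assoc Y₁ ((h α)ᴴ * X) (h α)]
  have hc1 : ∀ α, (h α)ᴴ * h α * Y₁ = Y₁ * ((h α)ᴴ * h α) := by
    intro α; rw [mul_assoc, h1h α, ← mul_assoc, h1h' α, mul_assoc]
  have hc2 : ∀ α, (h α)ᴴ * h α * Y₂ = Y₂ * ((h α)ᴴ * h α) := by
    intro α; rw [mul_assoc, h2h α, ← mul_assoc, h2h' α, mul_assoc]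
  have c1 : ∀ α, (h α)ᴴ * h α * (Y₁ * X * Y₂) = Y₁ * ((h α)ᴴ * h α * X) * Y₂ := by
    intro α
    rw [← mul_assoc, ← mul_assoc, hc1 α, mul_assoc Y₁ ((h α)ᴴ * h α) X]
  have c2 : ∀ α, (Y₁ * X * Y₂) * ((h α)ᴴ * h α) = Y₁ * (X * ((h α)ᴴ * h α)) * Y₂ := by
    intro α
    rw [mul_assoc (Y₁ * X) Y₂ _, ← hc2 α, ← mul_assoc, mul_assoc Y₁ X _]
  rw [lindbladDualOf_apply, lindbladDualOf_apply]
  simp only [mul_add, add_mul, Finset.mul_sum, Finset.sum_mul, mul_sub, sub_mul,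
    mul_smul_comm, smul_mul_assoc, smul_add, smul_sub]
  congr 1
  · rw [a1, a2]
  · refine Finset.sum_congr rfl fun α _ => ?_
    rw [b1 α, c1 α, c2 α]

lemma expL_bimodule (L : Matrix (Fin d) (Fin d) ℂ →ₗ[ℂ] Matrix (Fin d) (Fin d) ℂ)
    (Y₁ Y₂ : Matrix (Fin d) (Fin d) ℂ)
    (hmod : ∀ X, L (Y₁ * X * Y₂) = Y₁ * L X * Y₂) (t : ℝ) (X : Matrix (Fin d) (Fin d) ℂ) :
    expL L t (Y₁ * X * Y₂) = Y₁ * expL L t X * Y₂ := by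
  set M : Matrix (Fin d) (Fin d) ℂ →L[ℂ] Matrix (Fin d) (Fin d) ℂ :=
    LinearMap.toContinuousLinearMap ((LinearMap.mulLeft ℂ Y₁).comp (LinearMap.mulRight ℂ Y₂))
    with hM
  have hMapp : ∀ Z, M Z = Y₁ * Z * Y₂ := by
    intro Z
    simp [hM, mul_assoc]
  have hcomm : Commute ((t : ℂ) • LinearMap.toContinuousLinearMap L) M := by
    show _ = _
    ext1 Z
    simp only [ContinuousLinearMap.mul_apply, ContinuousLinearMap.smul_apply, _root_.map_smul]
    congr 1
    rw [hMapp, hMapp]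
    simpa using hmod Z
  have h2 : Commute (expL L t) M := by
    letI : IsTopologicalRing (Matrix (Fin d) (Fin d) ℂ →L[ℂ] Matrix (Fin d) (Fin d) ℂ) :=
      @NonUnitalSeminormedRing.toIsTopologicalRing _
        (ContinuousLinearMap.toNormedRing (𝕜 := ℂ)
          (E := Matrix (Fin d) (Fin d) ℂ)).toSeminormedRing.toNonUnitalSeminormedRing
    exact hcomm.exp_left
  calc expL L t (Y₁ * X * Y₂) = (expL L t * M) X := by
        rw [ContinuousLinearMap.mul_apply, hMapp]
      _ = (M * (expL L t)) X := by rw [h2.eq]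
      _ = Y₁ * expL L t X * Y₂ := by rw [ContinuousLinearMap.mul_apply, hMapp]

theorem stmt3 (d : ℕ) (hd : 1 ≤ d)
    (H : Matrix (Fin d) (Fin d) ℂ) (hH : H.IsHermitian)
    {n : ℕ} (h : Fin n → Matrix (Fin d) (Fin d) ℂ)
    (GT : Matrix (Fin d) (Fin d) ℂ →ₗ[ℂ] Matrix (Fin d) (Fin d) ℂ)
    (hGT : ∀ X, Tendsto (fun T : ℝ => T⁻¹ • ∫ t in (0:ℝ)..T, expL (lindbladDualOf H h) t X)
      atTop (nhds (GT X)))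
    (hρ : ∃ ρstar : Matrix (Fin d) (Fin d) ℂ,
      ρstar.PosDef ∧ ρstar.trace = 1 ∧ lindbladOf H h ρstar = 0) :
    ∀ Y₁ Y₂ X : Matrix (Fin d) (Fin d) ℂ,
      lindbladDualOf H h Y₁ = 0 → lindbladDualOf H h Y₂ = 0 →
      GT (Y₁ * X * Y₂) = Y₁ * GT X * Y₂ := by
  obtain ⟨ρ, hρpos, -, hstat⟩ := hρ
  intro Y₁ Y₂ X hY₁ hY₂
  obtain ⟨hk1, hk1', hH1⟩ := fixed_comm_all H hH h hρpos hstat Y₁ hY₁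
  obtain ⟨hk2, hk2', hH2⟩ := fixed_comm_all H hH h hρpos hstat Y₂ hY₂
  have hmod : ∀ Z, lindbladDualOf H h (Y₁ * Z * Y₂) = Y₁ * lindbladDualOf H h Z * Y₂ :=
    fun Z => lindbladDualOf_bimodule H h Y₁ Y₂ Z hH1 hH2 hk1 hk2 hk1' hk2'
  have hexp : ∀ (t : ℝ) Z, expL (lindbladDualOf H h) t (Y₁ * Z * Y₂)
      = Y₁ * expL (lindbladDualOf H h) t Z * Y₂ :=
    fun t Z => expL_bimodule _ Y₁ Y₂ hmod t Z
  set M : Matrix (Fin d) (Fin d) ℂ →L[ℂ] Matrix (Fin d) (Fin d) ℂ :=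
    LinearMap.toContinuousLinearMap ((LinearMap.mulLeft ℂ Y₁).comp (LinearMap.mulRight ℂ Y₂))
    with hM
  have hMapp : ∀ Z, M Z = Y₁ * Z * Y₂ := by
    intro Z
    simp [hM, mul_assoc]
  have hcont : Continuous fun t : ℝ => expL (lindbladDualOf H h) t X := by
    apply Continuous.clm_apply ?_ continuous_const
    have hs : Continuous fun t : ℝ => (t : ℂ) • LinearMap.toContinuousLinearMap (lindbladDualOf H h) :=
      (Complex.continuous_ofReal).smul continuous_const
    let i1 : NormedRing (Matrix (Fin d) (Fin d) ℂ →L[ℂ] Matrix (Fin d) (Fin d) ℂ) := ContinuousLinearMap.toNormedRing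
    let i2 : NormedAlgebra ℂ (Matrix (Fin d) (Fin d) ℂ →L[ℂ] Matrix (Fin d) (Fin d) ℂ) := ContinuousLinearMap.toNormedAlgebra
    let i3 : NormedAlgebra ℚ (Matrix (Fin d) (Fin d) ℂ →L[ℂ] Matrix (Fin d) (Fin d) ℂ) := NormedAlgebra.restrictScalars ℚ ℂ _
    have i0 : SequentialSpace (Matrix (Fin d) (Fin d) ℂ) := by exact (inferInstance : SequentialSpace (Fin d → Fin d → ℂ))
    have i4 : CompleteSpace (Matrix (Fin d) (Fin d) ℂ →L[ℂ] Matrix (Fin d) (Fin d) ℂ) := ContinuousLinearMap.instCompleteSpace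
    exact (@NormedSpace.exp_continuous _ i1 i3 i4).comp hs
  have hfun : ∀ T : ℝ, T⁻¹ • ∫ t in (0:ℝ)..T, expL (lindbladDualOf H h) t (Y₁ * X * Y₂)
      = M (T⁻¹ • ∫ t in (0:ℝ)..T, expL (lindbladDualOf H h) t X) := by
    intro T
    rw [M.map_smul_of_tower]
    congr 1
    have : ∀ t : ℝ, expL (lindbladDualOf H h) t (Y₁ * X * Y₂)
        = M (expL (lindbladDualOf H h) t X) := by
      intro t; rw [hMapp]; exact hexp t X
    simp_rw [this]
    exact M.intervalIntegral_comp_comm (hcont.intervalIntegrable _ _)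
  have ht1 : Tendsto (fun T : ℝ => T⁻¹ • ∫ t in (0:ℝ)..T, expL (lindbladDualOf H h) t (Y₁ * X * Y₂))
      atTop (nhds (M (GT X))) := by
    simp_rw [hfun]
    exact (M.continuous.tendsto _).comp (hGT X)
  have := tendsto_nhds_unique (hGT (Y₁ * X * Y₂)) ht1
  rw [this, hMapp]
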